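/- Let K be an infinite field, let 𝒳 ⊆ Mat_{k,n}(K) be a K-linear subspace, and define r(p,q) = rank(𝒳^{p,q}). Then r is weakly concave in each variable: 2·r(p,q+1) ≥ r(p,q) + r(p,q+2) and 2·r(p+1,q) ≥ r(p,q) + r(p+2,q) for all p, q ≥ 1. -/

import Mathlib

open Matrix Kronecker

/-- The `(p,q)` tensor blow-up of a linear subspace of matrices: the span of all
Kronecker products `A ⊗ₖ T` with `A ∈ 𝒳` and `T` a `p × q` matrix. -/
def blowUp {K : Type} [Field K] {a b : Type} [Fintype a] [Fintype b]
    (𝒳 : Submodule K (Matrix a b K)) (p q : ℕ) :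
    Submodule K (Matrix (a × Fin p) (b × Fin q) K) :=
  Submodule.span K {M | ∃ A ∈ 𝒳, ∃ T : Matrix (Fin p) (Fin q) K, M = A ⊗ₖ T}

/-- The rank of a linear subspace of matrices: the maximal rank of a member. -/
noncomputable def spaceRank {K : Type} [Field K] {a b : Type} [Fintype a] [Fintype b]
    (𝒴 : Submodule K (Matrix a b K)) : ℕ :=
  sSup (Matrix.rank '' (𝒴 : Set (Matrix a b K)))

section Aux

open Module Submodule

set_option linter.unusedSectionVars false
set_option linter.unnecessarySimpa false
set_option linter.unreachableTactic false
set_option linter.unusedTactic false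

variable {K : Type} [Field K]

lemma rank_submatrix_cols_le' {R C C' : Type} [Fintype R] [Fintype C] [Fintype C']
    (M : Matrix R C K) (g : C' → C) : (M.submatrix id g).rank ≤ M.rank := by
  rw [Matrix.rank_eq_finrank_span_cols, Matrix.rank_eq_finrank_span_cols]
  apply Submodule.finrank_mono
  apply Submodule.span_mono
  rintro _ ⟨c', rfl⟩
  exact ⟨g c', rfl⟩

lemma rank_submatrix_le'' {R C R' C' : Type} [Fintype R] [Fintype C] [Fintype R'] [Fintype C']
    (M : Matrix R C K) (f : R' → R) (g : C' → C) : (M.submatrix f g).rank ≤ M.rank := by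
  have h1 : (M.submatrix f id).rank ≤ M.rank := by
    rw [← Matrix.rank_transpose (M.submatrix f id), ← Matrix.rank_transpose M]
    exact rank_submatrix_cols_le' Mᵀ f
  exact le_trans (rank_submatrix_cols_le' (M.submatrix f id) g) h1

lemma exists_indep_cols {R C : Type} [Fintype R] [Fintype C] (M : Matrix R C K) :
    ∃ g : Fin M.rank → C, LinearIndependent K fun i => Mᵀ (g i) := by
  obtain ⟨t, hts, hspan, hli⟩ := exists_linearIndependent K (Set.range Mᵀ)
  have hfin : t.Finite := hli.setFinite
  haveI := hfin.fintype
  have hcard : Fintype.card t = M.rank := by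
    rw [← Set.toFinset_card, ← finrank_span_set_eq_card hli, hspan]
    exact (Matrix.rank_eq_finrank_span_cols M).symm
  let e : Fin M.rank ≃ t := (Fintype.equivFinOfCardEq hcard).symm
  choose g hg using fun i : Fin M.rank => hts (e i).2
  refine ⟨g, ?_⟩
  have hfe : (fun i => Mᵀ (g i)) = fun i => ((e i : _) : R → K) := funext fun i => hg i
  rw [hfe]
  exact hli.comp e e.injective

lemma exists_det_submatrix {R C : Type} [Fintype R] [Fintype C] (M : Matrix R C K) :
    ∃ (f : Fin M.rank → R) (g : Fin M.rank → C), (M.submatrix f g).det ≠ 0 := by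
  obtain ⟨g, hg⟩ := exists_indep_cols M
  have hM' : (M.submatrix id g).rank = M.rank := by
    rw [Matrix.rank_eq_finrank_span_cols]
    have h1 : (M.submatrix id g).col = fun i => Mᵀ (g i) := rfl
    rw [h1, finrank_span_eq_card hg, Fintype.card_fin]
  have hMT : (M.submatrix id g)ᵀ.rank = M.rank := by rw [Matrix.rank_transpose]; exact hM'
  obtain ⟨f', hf'⟩ := exists_indep_cols (M.submatrix id g)ᵀ
  let f : Fin M.rank → R := f' ∘ Fin.cast hMT.symm
  refine ⟨f, g, ?_⟩
  have hli : LinearIndependent K fun i : Fin M.rank => (M.submatrix f g) i :=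
    hf'.comp (Fin.cast hMT.symm) (Fin.cast_injective _)
  have hu : IsUnit (M.submatrix f g) := Matrix.linearIndependent_rows_iff_isUnit.1 hli
  exact fun h0 => (IsUnit.ne_zero ((Matrix.isUnit_iff_isUnit_det _).1 hu)) h0

lemma le_rank_of_det_submatrix {R C : Type} [Fintype R] [Fintype C] {r : ℕ}
    (M : Matrix R C K) (f : Fin r → R) (g : Fin r → C)
    (h : (M.submatrix f g).det ≠ 0) : r ≤ M.rank := by
  have hu : IsUnit (M.submatrix f g) := (Matrix.isUnit_iff_isUnit_det _).2 (isUnit_iff_ne_zero.2 h)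
  have hr := Matrix.rank_of_isUnit _ hu
  calc r = (M.submatrix f g).rank := by rw [hr, Fintype.card_fin]
    _ ≤ M.rank := rank_submatrix_le'' M f g

lemma exists_finset_rank_le {R C : Type} [Fintype R] [Fintype C]
    (M N : Matrix R C K) :
    ∃ s : Finset K, ∀ μ ∉ s, M.rank ≤ (M + μ • N).rank := by
  classical
  obtain ⟨f, g, hdet⟩ := exists_det_submatrix M
  set P : Matrix R C (Polynomial K) :=
    M.map Polynomial.C + (Polynomial.X : Polynomial K) • N.map Polynomial.C with hP
  set p : Polynomial K := (P.submatrix f g).det with hp'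
  have heval : ∀ μ : K, p.eval μ = ((M + μ • N).submatrix f g).det := by
    intro μ
    have h1 := RingHom.map_det (Polynomial.evalRingHom μ) (P.submatrix f g)
    have h2 : ((P.submatrix f g).map (Polynomial.evalRingHom μ)) =
        (M + μ • N).submatrix f g := by
      ext i j
      simp only [hP, Matrix.map_apply, Matrix.submatrix_apply, Matrix.add_apply,
        Matrix.smul_apply, smul_eq_mul, Polynomial.coe_evalRingHom, Polynomial.eval_add,
        Polynomial.eval_mul, Polynomial.eval_C, Polynomial.eval_X]
    rw [RingHom.mapMatrix_apply, h2] at h1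
    exact h1
  have hpne : p ≠ 0 := by
    intro h
    apply hdet
    have h0 := heval 0
    rw [h] at h0
    simpa using h0.symm
  refine ⟨p.roots.toFinset, fun μ hμ => ?_⟩
  have hev : p.eval μ ≠ 0 := by
    intro h0
    exact hμ (Multiset.mem_toFinset.2 (Polynomial.mem_roots'.2 ⟨hpne, h0⟩))
  exact le_rank_of_det_submatrix _ f g (by rw [← heval]; exact hev)

lemma rank_smul_of_ne_zero {R C : Type} [Fintype R] [Fintype C] {c : K} (hc : c ≠ 0)
    (M : Matrix R C K) : (c • M).rank = M.rank := by
  classical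
  have h1 : c • M = (c • (1 : Matrix R R K)) * M := by rw [Matrix.smul_mul, Matrix.one_mul]
  rw [h1]
  apply Matrix.rank_mul_eq_right_of_isUnit_det
  rw [Matrix.det_smul, Matrix.det_one, mul_one]
  exact isUnit_iff_ne_zero.2 (pow_ne_zero _ hc)

lemma rank_submodular {R C C₀ C₁ C₂ : Type} [Fintype R] [Fintype C] [Fintype C₀]
    [Fintype C₁] [Fintype C₂]
    (M : Matrix R C K) (g₀ : C₀ → C) (g₁ : C₁ → C) (g₂ : C₂ → C)
    (hcov : ∀ c : C, (∃ x, g₁ x = c) ∨ (∃ x, g₂ x = c))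
    (h1 : ∀ x, ∃ y, g₁ y = g₀ x) (h2 : ∀ x, ∃ y, g₂ y = g₀ x) :
    M.rank + (M.submatrix id g₀).rank ≤ (M.submatrix id g₁).rank + (M.submatrix id g₂).rank := by
  have e0 : (M.submatrix id g₀)ᵀ = fun x => Mᵀ (g₀ x) := rfl
  have e1 : (M.submatrix id g₁)ᵀ = fun x => Mᵀ (g₁ x) := rfl
  have e2 : (M.submatrix id g₂)ᵀ = fun x => Mᵀ (g₂ x) := rfl
  simp only [Matrix.rank_eq_finrank_span_cols, e0, e1, e2]
  set S₀ := span K (Set.range fun x => Mᵀ (g₀ x)) with hS₀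
  set S₁ := span K (Set.range fun x => Mᵀ (g₁ x)) with hS₁
  set S₂ := span K (Set.range fun x => Mᵀ (g₂ x)) with hS₂
  have hsup : span K (Set.range Mᵀ) = S₁ ⊔ S₂ := by
    rw [hS₁, hS₂, ← Submodule.span_union]
    congr 1
    ext v
    constructor
    · rintro ⟨c, rfl⟩
      rcases hcov c with ⟨x, hx⟩ | ⟨x, hx⟩
      · exact Or.inl ⟨x, by dsimp only; rw [hx]⟩
      · exact Or.inr ⟨x, by dsimp only; rw [hx]⟩
    · rintro (⟨x, rfl⟩ | ⟨x, rfl⟩) <;> exact ⟨_, rfl⟩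
  have hinf : S₀ ≤ S₁ ⊓ S₂ := by
    refine le_inf ?_ ?_ <;> rw [hS₀] <;> apply Submodule.span_le.2
    · rintro _ ⟨x, rfl⟩
      obtain ⟨y, hy⟩ := h1 x
      exact Submodule.subset_span ⟨y, by dsimp only; rw [hy]⟩
    · rintro _ ⟨x, rfl⟩
      obtain ⟨y, hy⟩ := h2 x
      exact Submodule.subset_span ⟨y, by dsimp only; rw [hy]⟩
  calc finrank K (span K (Set.range Mᵀ)) + finrank K S₀
      ≤ finrank K (S₁ ⊔ S₂ : Submodule K (R → K)) + finrank K (S₁ ⊓ S₂ : Submodule K (R → K)) := by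
        rw [hsup]; exact add_le_add le_rfl (Submodule.finrank_mono hinf)
    _ = finrank K S₁ + finrank K S₂ := Submodule.finrank_sup_add_finrank_inf_eq S₁ S₂

variable {K : Type} [Field K] {a b : Type} [Fintype a] [Fintype b]

lemma bddAbove_ranks (𝒴 : Submodule K (Matrix a b K)) :
    BddAbove (Matrix.rank '' (𝒴 : Set (Matrix a b K))) := by
  refine ⟨Fintype.card b, ?_⟩
  rintro r ⟨M, _, rfl⟩
  exact M.rank_le_card_width

lemma rank_le_spaceRank {𝒴 : Submodule K (Matrix a b K)} {M : Matrix a b K} (hM : M ∈ 𝒴) :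
    M.rank ≤ spaceRank 𝒴 :=
  le_csSup (bddAbove_ranks 𝒴) ⟨M, hM, rfl⟩

lemma exists_rank_eq_spaceRank (𝒴 : Submodule K (Matrix a b K)) :
    ∃ M ∈ 𝒴, M.rank = spaceRank 𝒴 := by
  have hmem := Nat.sSup_mem (s := Matrix.rank '' (𝒴 : Set (Matrix a b K)))
    ⟨Matrix.rank 0, ⟨0, 𝒴.zero_mem, rfl⟩⟩ (bddAbove_ranks 𝒴)
  obtain ⟨M, hM, h⟩ := hmem
  exact ⟨M, hM, h⟩

lemma blowUp_submatrix (𝒳 : Submodule K (Matrix a b K)) {p q : ℕ} (p' q' : ℕ)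
    {M : Matrix (a × Fin p) (b × Fin q) K} (hM : M ∈ blowUp 𝒳 p q)
    (f : Fin p' → Fin p) (g : Fin q' → Fin q) :
    M.submatrix (Prod.map id f) (Prod.map id g) ∈ blowUp 𝒳 p' q' := by
  induction hM using Submodule.span_induction with
  | mem x hx =>
      obtain ⟨A, hA, T, rfl⟩ := hx
      apply Submodule.subset_span
      exact ⟨A, hA, T.submatrix f g, by ext ⟨i, ip⟩ ⟨j, jq⟩; rfl⟩
  | zero => exact (blowUp 𝒳 p' q').zero_mem
  | add x y hx hy ihx ihy => exact (blowUp 𝒳 p' q').add_mem ihx ihy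
  | smul c x hx ih => exact (blowUp 𝒳 p' q').smul_mem c ih

def padMat {R C : Type} (q : ℕ) (M : Matrix R (C × Fin q) K) :
    Matrix R (C × Fin (q + 2)) K :=
  Matrix.of fun i j => if h : (j.2 : ℕ) < q then M i (j.1, ⟨j.2, h⟩) else 0

lemma padMat_submatrix {R C : Type} (q : ℕ) (M : Matrix R (C × Fin q) K) :
    (padMat q M).submatrix id (Prod.map id (Fin.castLE (by omega))) = M := by
  ext i ⟨j, jq⟩
  simp only [Matrix.submatrix_apply, padMat, Matrix.of_apply, id_eq, Prod.map_apply]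
  rw [dif_pos (by simp [Fin.castLE] : ((Fin.castLE (by omega) jq : Fin (q+2)) : ℕ) < q)]
  simp

lemma padMat_mem (𝒳 : Submodule K (Matrix a b K)) {p q : ℕ}
    {M : Matrix (a × Fin p) (b × Fin q) K} (hM : M ∈ blowUp 𝒳 p q) :
    padMat q M ∈ blowUp 𝒳 p (q + 2) := by
  induction hM using Submodule.span_induction with
  | mem x hx =>
      obtain ⟨A, hA, T, rfl⟩ := hx
      apply Submodule.subset_span
      refine ⟨A, hA, Matrix.of fun i (j : Fin (q+2)) =>
        if h : (j : ℕ) < q then T i ⟨j, h⟩ else 0, ?_⟩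
      ext ⟨i, ip⟩ ⟨j, jq⟩
      by_cases h : (jq : ℕ) < q <;>
        simp [padMat, Matrix.kroneckerMap_apply, h]
  | zero =>
      have : padMat (K := K) (R := a × Fin p) (C := b) q 0 = 0 := by
        ext i j
        simp [padMat]
      rw [this]; exact (blowUp 𝒳 p (q+2)).zero_mem
  | add x y hx hy ihx ihy =>
      have : padMat q (x + y) = padMat q x + padMat q y := by
        ext i j
        by_cases h : (j.2 : ℕ) < q <;> simp [padMat, h]
      rw [this]; exact (blowUp 𝒳 p (q+2)).add_mem ihx ihy
  | smul c x hx ih =>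
      have : padMat q (c • x) = c • padMat q x := by
        ext i j
        by_cases h : (j.2 : ℕ) < q <;> simp [padMat, h]
      rw [this]; exact (blowUp 𝒳 p (q+2)).smul_mem c ih

lemma mem_blowUp_transpose (𝒳 : Submodule K (Matrix a b K)) {p q : ℕ}
    {M : Matrix (a × Fin p) (b × Fin q) K} (hM : M ∈ blowUp 𝒳 p q) :
    Mᵀ ∈ blowUp (𝒳.map (Matrix.transposeLinearEquiv a b K K).toLinearMap) q p := by
  induction hM using Submodule.span_induction with
  | mem x hx =>
      obtain ⟨A, hA, T, rfl⟩ := hx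
      apply Submodule.subset_span
      exact ⟨Aᵀ, ⟨A, hA, rfl⟩, Tᵀ, by ext ⟨j, jq⟩ ⟨i, ip⟩; rfl⟩
  | zero => simpa using Submodule.zero_mem _
  | add x y hx hy ihx ihy => rw [Matrix.transpose_add]; exact Submodule.add_mem _ ihx ihy
  | smul c x hx ih => rw [Matrix.transpose_smul]; exact Submodule.smul_mem _ c ih

lemma mem_blowUp_transpose' (𝒳 : Submodule K (Matrix a b K)) {p q : ℕ}
    {N : Matrix (b × Fin q) (a × Fin p) K}
    (hN : N ∈ blowUp (𝒳.map (Matrix.transposeLinearEquiv a b K K).toLinearMap) q p) :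
    Nᵀ ∈ blowUp 𝒳 p q := by
  induction hN using Submodule.span_induction with
  | mem x hx =>
      obtain ⟨A', hA', T, rfl⟩ := hx
      obtain ⟨A, hA, rfl⟩ := hA'
      apply Submodule.subset_span
      exact ⟨A, hA, Tᵀ, by ext ⟨i, ip⟩ ⟨j, jq⟩; rfl⟩
  | zero => simpa using Submodule.zero_mem _
  | add x y hx hy ihx ihy => rw [Matrix.transpose_add]; exact Submodule.add_mem _ ihx ihy
  | smul c x hx ih => rw [Matrix.transpose_smul]; exact Submodule.smul_mem _ c ih

lemma spaceRank_blowUp_transpose (𝒳 : Submodule K (Matrix a b K)) (p q : ℕ) :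
    spaceRank (blowUp 𝒳 p q) =
      spaceRank (blowUp (𝒳.map (Matrix.transposeLinearEquiv a b K K).toLinearMap) q p) := by
  unfold spaceRank
  congr 1
  ext r
  constructor
  · rintro ⟨M, hM, rfl⟩
    exact ⟨Mᵀ, mem_blowUp_transpose 𝒳 hM, Matrix.rank_transpose M⟩
  · rintro ⟨N, hN, rfl⟩
    exact ⟨Nᵀ, mem_blowUp_transpose' 𝒳 hN, Matrix.rank_transpose N⟩

lemma concave_cols [Infinite K] (𝒳 : Submodule K (Matrix a b K)) (p q : ℕ) :
    spaceRank (blowUp 𝒳 p q) + spaceRank (blowUp 𝒳 p (q + 2)) ≤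
      2 * spaceRank (blowUp 𝒳 p (q + 1)) := by
  classical
  obtain ⟨A, hA, hrA⟩ := exists_rank_eq_spaceRank (blowUp 𝒳 p q)
  obtain ⟨B₀, hB₀, hrB₀⟩ := exists_rank_eq_spaceRank (blowUp 𝒳 p (q + 2))
  set A' : Matrix (a × Fin p) (b × Fin (q + 2)) K := padMat q A with hA'def
  have hA' : A' ∈ blowUp 𝒳 p (q + 2) := padMat_mem 𝒳 hA
  set ι₀ : b × Fin q → b × Fin (q + 2) :=
    Prod.map id (Fin.castLE (by omega)) with hι₀
  have hA'r : A'.submatrix id ι₀ = A := padMat_submatrix q A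
  obtain ⟨s₁, hs₁⟩ := exists_finset_rank_le B₀ A'
  set C₀ : Matrix (a × Fin p) (b × Fin q) K := B₀.submatrix id ι₀ with hC₀
  obtain ⟨s₂, hs₂⟩ := exists_finset_rank_le A C₀
  obtain ⟨μ, hμ⟩ := Infinite.exists_notMem_finset (s₁ ∪ insert 0 (s₂.image (·⁻¹)))
  simp only [Finset.mem_union, Finset.mem_insert, Finset.mem_image, not_or, not_exists] at hμ
  obtain ⟨hμ1, hμ0, hμ2⟩ := hμ
  have hμinv : μ⁻¹ ∉ s₂ := fun h => hμ2 μ⁻¹ ⟨h, inv_inv μ⟩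
  set B : Matrix (a × Fin p) (b × Fin (q + 2)) K := B₀ + μ • A' with hB
  have hBmem : B ∈ blowUp 𝒳 p (q + 2) :=
    Submodule.add_mem _ hB₀ (Submodule.smul_mem _ μ hA')
  have h3 : spaceRank (blowUp 𝒳 p (q + 2)) ≤ B.rank := by
    rw [← hrB₀]; exact hs₁ μ hμ1
  have hBsub : B.submatrix id ι₀ = C₀ + μ • A := by
    have : B.submatrix id ι₀ = B₀.submatrix id ι₀ + μ • (A'.submatrix id ι₀) := rfl
    rw [this, hA'r, hC₀]
  have h1' : spaceRank (blowUp 𝒳 p q) ≤ (B.submatrix id ι₀).rank := by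
    rw [hBsub]
    have heq : C₀ + μ • A = μ • (A + μ⁻¹ • C₀) := by
      rw [smul_add, smul_smul, mul_inv_cancel₀ hμ0, one_smul, add_comm]
    rw [heq, rank_smul_of_ne_zero hμ0, ← hrA]
    exact hs₂ μ⁻¹ hμinv
  -- the two (q+1)-column selections
  set f₁ : Fin (q + 1) → Fin (q + 2) := Fin.castLE (by omega) with hf₁
  set f₂ : Fin (q + 1) → Fin (q + 2) :=
    fun j => if h : (j : ℕ) < q then ⟨j, by omega⟩ else ⟨q + 1, by omega⟩ with hf₂
  set g₁ : b × Fin (q + 1) → b × Fin (q + 2) := Prod.map id f₁ with hg₁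
  set g₂ : b × Fin (q + 1) → b × Fin (q + 2) := Prod.map id f₂ with hg₂
  have hcov : ∀ c : b × Fin (q + 2), (∃ x, g₁ x = c) ∨ (∃ x, g₂ x = c) := by
    rintro ⟨x, j⟩
    by_cases hj : (j : ℕ) < q + 1
    · refine Or.inl ⟨(x, ⟨j, hj⟩), ?_⟩
      simp only [hg₁, hf₁, Prod.map_apply, id_eq]
      refine Prod.ext rfl (Fin.ext ?_)
      simp
    · have hq1 : (j : ℕ) = q + 1 := by omega
      refine Or.inr ⟨(x, ⟨q, by omega⟩), ?_⟩
      simp only [hg₂, hf₂, Prod.map_apply, id_eq]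
      rw [dif_neg (by simp)]
      refine Prod.ext rfl (Fin.ext ?_)
      simp [hq1]
  have hcov1 : ∀ x : b × Fin q, ∃ y, g₁ y = ι₀ x := by
    rintro ⟨x, j⟩
    refine ⟨(x, ⟨j, by omega⟩), ?_⟩
    simp only [hg₁, hf₁, hι₀, Prod.map_apply, id_eq]
    exact Prod.ext rfl (Fin.ext (by simp))
  have hcov2 : ∀ x : b × Fin q, ∃ y, g₂ y = ι₀ x := by
    rintro ⟨x, j⟩
    refine ⟨(x, ⟨j, by omega⟩), ?_⟩
    simp only [hg₂, hf₂, hι₀, Prod.map_apply, id_eq]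
    rw [dif_pos (by simpa using j.isLt)]
    exact Prod.ext rfl (Fin.ext (by simp))
  have hsub := rank_submodular B ι₀ g₁ g₂ hcov hcov1 hcov2
  have hm1 : (B.submatrix id g₁).rank ≤ spaceRank (blowUp 𝒳 p (q + 1)) := by
    have h := blowUp_submatrix 𝒳 p (q + 1) hBmem id f₁
    rw [Prod.map_id] at h
    exact rank_le_spaceRank h
  have hm2 : (B.submatrix id g₂).rank ≤ spaceRank (blowUp 𝒳 p (q + 1)) := by
    have h := blowUp_submatrix 𝒳 p (q + 1) hBmem id f₂
    rw [Prod.map_id] at h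
    exact rank_le_spaceRank h
  omega

end Aux

theorem statement7 (K : Type) [Field K] [Infinite K] (k n : ℕ)
    (𝒳 : Submodule K (Matrix (Fin k) (Fin n) K)) (p q : ℕ) (hp : 1 ≤ p) (hq : 1 ≤ q) :
    spaceRank (blowUp 𝒳 p q) + spaceRank (blowUp 𝒳 p (q + 2)) ≤
      2 * spaceRank (blowUp 𝒳 p (q + 1)) ∧
    spaceRank (blowUp 𝒳 p q) + spaceRank (blowUp 𝒳 (p + 2) q) ≤
      2 * spaceRank (blowUp 𝒳 (p + 1) q) := by
  constructor
  · exact concave_cols 𝒳 p q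
  · rw [spaceRank_blowUp_transpose 𝒳 p q, spaceRank_blowUp_transpose 𝒳 (p + 2) q,
      spaceRank_blowUp_transpose 𝒳 (p + 1) q]
    exact concave_cols _ q p
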